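/- For every integer g ≥ 1, let Q_g ∈ ℚ[y] be the unique polynomial with (1 − 108w)^{5g−1} · W_g = w · Q_g(w). Then Q_g(1/108) = 162^g · C_g. (For g = 1 this reads Q₁(1/108) = 162·(5 − 324/108) = 324 = 162·C₁ with C₁ = 2.) -/

import Mathlib

open PowerSeries

/-- The formal derivative `d/dx` on `ℚ⟦x⟧`. -/
noncomputable def D : PowerSeries ℚ → PowerSeries ℚ := PowerSeries.derivativeFun

namespace StmtAux
open Polynomial

lemma Dmul (f g : ℚ⟦X⟧) : D (f * g) = f * D g + g * D f := by
  rw [D, derivativeFun_mul, smul_eq_mul, smul_eq_mul]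
lemma Dadd (f g : ℚ⟦X⟧) : D (f + g) = D f + D g := derivativeFun_add f g
lemma Dsub (f g : ℚ⟦X⟧) : D (f - g) = D f - D g := by
  have h := Dadd (f - g) g
  simp only [sub_add_cancel] at h
  linear_combination -h
lemma DC (c : ℚ) : D (PowerSeries.C (R := ℚ) c) = 0 := derivativeFun_C (R := ℚ) (r := c)
lemma DX : D (PowerSeries.X : ℚ⟦X⟧) = 1 := PowerSeries.derivative_X (R := ℚ)
lemma Done : D 1 = 0 := derivativeFun_one
lemma Dnum (n : ℕ) [n.AtLeastTwo] : D (OfNat.ofNat n : ℚ⟦X⟧) = 0 := by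
  rw [← map_ofNat (PowerSeries.C (R := ℚ)) n]; exact DC _

section
variable {w s : ℚ⟦X⟧}

lemma Dwpow (hDw : (1-108*w) * D w = s) :
    ∀ m : ℕ, (1-108*w) * D (w^(m+1)) = ((m:ℚ⟦X⟧)+1) * w^m * s := by
  intro m
  induction m with
  | zero => simpa using hDw
  | succ k ih =>
    rw [pow_succ, Dmul]
    push_cast
    linear_combination w^(k+1) * hDw + w * ih

lemma D_aeval (hDw : (1-108*w) * D w = s) (P : ℚ[X]) :
    (1-108*w) * D (aeval w P) = aeval w (derivative P) * s := by
  induction P using Polynomial.induction_on' with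
  | add p q hp hq => rw [map_add, Dadd, derivative_add, map_add]; linear_combination hp + hq
  | monomial n a =>
    rw [aeval_monomial, derivative_monomial, aeval_monomial, ← PowerSeries.C_eq_algebraMap,
      Dmul, DC]
    cases n with
    | zero => simp [Done]
    | succ m =>
      have h := Dwpow hDw m
      simp only [Nat.add_sub_cancel, map_mul, map_natCast, ← PowerSeries.C_eq_algebraMap]
      push_cast
      linear_combination (PowerSeries.C (R := ℚ) a) * h

lemma eps_deriv_pow : ∀ n : ℕ, (1-108*Polynomial.X : ℚ[X]) * derivative ((1-108*Polynomial.X)^n)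
    = (-108) * (n:ℚ[X]) * (1-108*Polynomial.X)^n := by
  intro n
  have hde : derivative (1-108*Polynomial.X : ℚ[X]) = -108 := by simp
  induction n with
  | zero => simp
  | succ k ih =>
    rw [pow_succ, derivative_mul, hde]
    push_cast
    linear_combination (1-108*Polynomial.X) * ih

/-- `e` is `(P(w) + Q(w)·s)/(1-108w)^n` with numerator values `a`, `b` at `w = 1/108`. -/
def GR (w s e : ℚ⟦X⟧) (n : ℕ) (a b : ℚ) : Prop :=
  ∃ P Q : Polynomial ℚ,
    (1 - 108*w)^n * e = aeval w P + aeval w Q * s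
    ∧ P.eval (1/108 : ℚ) = a ∧ Q.eval (1/108 : ℚ) = b

namespace GR

lemma zero (n : ℕ) : GR w s 0 n 0 0 :=
  ⟨0, 0, by simp, by simp, by simp⟩

lemma congr {e n a b a' b'} (h : GR w s e n a b) (ha : a = a') (hb : b = b') :
    GR w s e n a' b' := ha ▸ hb ▸ h

lemma congr' {e n m a b a' b'} (h : GR w s e n a b) (hn : n = m) (ha : a = a') (hb : b = b') :
    GR w s e m a' b' := hn ▸ ha ▸ hb ▸ h

lemma ofEq {e e' n a b} (h : GR w s e n a b) (he : e = e') : GR w s e' n a b := he ▸ h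

lemma add {e₁ e₂ n a₁ b₁ a₂ b₂} (h₁ : GR w s e₁ n a₁ b₁) (h₂ : GR w s e₂ n a₂ b₂) :
    GR w s (e₁ + e₂) n (a₁ + a₂) (b₁ + b₂) := by
  obtain ⟨P₁, Q₁, hE₁, hP₁, hQ₁⟩ := h₁
  obtain ⟨P₂, Q₂, hE₂, hP₂, hQ₂⟩ := h₂
  exact ⟨P₁ + P₂, Q₁ + Q₂, by simp only [map_add]; linear_combination hE₁ + hE₂,
    by rw [eval_add, hP₁, hP₂], by rw [eval_add, hQ₁, hQ₂]⟩

lemma cmul {e n a b} (c : ℚ) (h : GR w s e n a b) :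
    GR w s (PowerSeries.C (R := ℚ) c * e) n (c * a) (c * b) := by
  obtain ⟨P, Q, hE, hP, hQ⟩ := h
  refine ⟨Polynomial.C c * P, Polynomial.C c * Q, ?_,
    by rw [eval_mul, eval_C, hP], by rw [eval_mul, eval_C, hQ]⟩
  simp only [map_mul, aeval_C, ← PowerSeries.C_eq_algebraMap]
  linear_combination (PowerSeries.C (R := ℚ) c) * hE

lemma sum {ι : Type*} (T : Finset ι) (f : ι → ℚ⟦X⟧) (af bf : ι → ℚ) (n : ℕ)
    (h : ∀ i ∈ T, GR w s (f i) n (af i) (bf i)) :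
    GR w s (∑ i ∈ T, f i) n (∑ i ∈ T, af i) (∑ i ∈ T, bf i) := by
  classical
  induction T using Finset.induction_on with
  | empty => simpa using zero n
  | insert a T' hni ih =>
    rw [Finset.sum_insert hni, Finset.sum_insert hni, Finset.sum_insert hni]
    exact (h a (Finset.mem_insert_self a T')).add
      (ih fun i hi => h i (Finset.mem_insert_of_mem hi))

lemma mul {e₁ e₂ n₁ n₂ a₁ b₁ a₂ b₂} (hs2 : s^2 = 1 - 72*w)
    (h₁ : GR w s e₁ n₁ a₁ b₁) (h₂ : GR w s e₂ n₂ a₂ b₂) :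
    GR w s (e₁ * e₂) (n₁ + n₂) (a₁*a₂ + b₁*b₂/3) (a₁*b₂ + a₂*b₁) := by
  obtain ⟨P₁, Q₁, hE₁, hP₁, hQ₁⟩ := h₁
  obtain ⟨P₂, Q₂, hE₂, hP₂, hQ₂⟩ := h₂
  refine ⟨P₁*P₂ + (1 - 72*Polynomial.X)*(Q₁*Q₂), P₁*Q₂ + P₂*Q₁, ?_, ?_, ?_⟩
  · simp only [map_add, map_mul, map_sub, map_one, map_ofNat, aeval_X]
    rw [pow_add]
    linear_combination ((1-108*w)^n₂ * e₂) * hE₁ + (aeval w P₁ + aeval w Q₁ * s) * hE₂ +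
      (aeval w Q₁ * aeval w Q₂) * hs2
  · simp only [eval_add, eval_mul, eval_sub, eval_one, eval_ofNat, eval_X, hP₁, hP₂, hQ₁, hQ₂]
    norm_num; ring
  · simp only [eval_add, eval_mul, eval_sub, eval_one, eval_ofNat, eval_X, hP₁, hP₂, hQ₁, hQ₂]

lemma raise1 {e n a b} (h : GR w s e n a b) : GR w s e (n+1) 0 0 := by
  obtain ⟨P, Q, hE, hP, hQ⟩ := h
  refine ⟨(1 - 108*Polynomial.X) * P, (1 - 108*Polynomial.X) * Q, ?_,
    by simp [eval_mul], by simp [eval_mul]⟩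
  simp only [map_mul, map_sub, map_one, map_ofNat, aeval_X]
  rw [pow_succ]
  linear_combination (1-108*w) * hE

lemma raiseLt {e n a b} (h : GR w s e n a b) {m : ℕ} (hm : n < m) : GR w s e m 0 0 := by
  induction m with
  | zero => omega
  | succ k ih =>
    rcases Nat.lt_succ_iff_lt_or_eq.mp hm with h' | h'
    · exact (ih h').raise1
    · subst h'; exact h.raise1

lemma shift {e n a b} (h : GR w s ((1 - 108*w) * e) n a b) : GR w s e (n+1) a b := by
  obtain ⟨P, Q, hE, hP, hQ⟩ := h
  exact ⟨P, Q, by rw [pow_succ]; linear_combination hE, hP, hQ⟩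

lemma D' {e : ℚ⟦X⟧} {n : ℕ} {a b : ℚ} (hs2 : s^2 = 1 - 72*w)
    (hDw : (1-108*w) * D w = s) (hDs : (1-108*w) * D s = -36)
    (h : GR w s e n a b) : GR w s (D e) (n+2) (36*n*b) (108*n*a) := by
  obtain ⟨P, Q, hE, hP, hQ⟩ := h
  have hrep : (1-108*w)^n = aeval w ((1-108*Polynomial.X : ℚ[X])^n) := by
    simp [map_pow, map_ofNat]
  have h2 : (1-108*w) * D ((1-108*w)^n)
      = aeval w (derivative ((1-108*Polynomial.X:ℚ[X])^n)) * s := by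
    rw [hrep]; exact D_aeval hDw _
  have hEn : (1-108*w) * ((1-108*w) * D ((1-108*w)^n))
      = -(108*(n:ℚ⟦X⟧)) * (1-108*w)^n * s := by
    have h3 := congrArg (fun p => aeval w p * s) (eps_deriv_pow n)
    simp only [map_mul, map_pow, map_sub, map_one, map_ofNat, map_natCast, aeval_X,
      map_neg] at h3
    calc (1-108*w) * ((1-108*w) * D ((1-108*w)^n))
        = (1-108*w) * (aeval w (derivative ((1-108*Polynomial.X:ℚ[X])^n)) * s) := by rw [h2]
      _ = -(108*(n:ℚ⟦X⟧)) * (1-108*w)^n * s := by linear_combination h3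
  have h1 := congrArg D hE
  rw [Dmul, Dadd, Dmul (aeval w Q) s] at h1
  have hP' := D_aeval hDw P
  have hQ' := D_aeval hDw Q
  refine ⟨(1-108*Polynomial.X)*((1-72*Polynomial.X)*(derivative Q) - 36*Q)
      + Polynomial.C (108*(n:ℚ))*((1-72*Polynomial.X)*Q),
    (1-108*Polynomial.X)*(derivative P) + Polynomial.C (108*(n:ℚ))*P, ?_, ?_, ?_⟩
  · simp only [map_add, map_mul, map_sub, map_one, map_ofNat, map_natCast, aeval_X, aeval_C,
      ← PowerSeries.C_eq_algebraMap]
    linear_combination (1-108*w)^2 * h1 - e * hEn + (108*(n:ℚ⟦X⟧)*s) * hE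
      + (1-108*w) * hP' + ((1-108*w) * aeval w Q) * hDs + ((1-108*w)*s) * hQ'
      + ((1-108*w) * aeval w (derivative Q) + 108*(n:ℚ⟦X⟧) * aeval w Q) * hs2
  · simp only [eval_add, eval_mul, eval_sub, eval_one, eval_ofNat, eval_X, eval_C, hP, hQ]
    norm_num
    ring
  · simp only [eval_add, eval_mul, eval_sub, eval_one, eval_ofNat, eval_X, eval_C, hP, hQ]
    norm_num

end GR

lemma aeval_w_inj (hcc : PowerSeries.constantCoeff w = 0) (hw0 : w ≠ 0) :
    ∀ (P : ℚ[X]), aeval w P = 0 → P = 0 := by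
  suffices H : ∀ n (P : ℚ[X]), P.natDegree = n → aeval w P = 0 → P = 0 by
    intro P h; exact H P.natDegree P rfl h
  intro n
  induction n using Nat.strong_induction_on with
  | _ n ih =>
    intro P hdeg h
    by_cases hP : P = 0
    · exact hP
    · have hsplit : Polynomial.X * divX P + Polynomial.C (P.coeff 0) = P := X_mul_divX_add P
      have h2 : w * aeval w (divX P) + algebraMap ℚ ℚ⟦X⟧ (P.coeff 0) = 0 := by
        rw [← h]
        conv_rhs => rw [← hsplit]
        simp only [map_add, map_mul, aeval_X, aeval_C]
      have hc0 : P.coeff 0 = 0 := by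
        have h3 := congrArg PowerSeries.constantCoeff h2
        simpa [hcc, ← PowerSeries.C_eq_algebraMap] using h3
      rw [hc0, map_zero, add_zero] at h2
      have h4 : aeval w (divX P) = 0 := by
        rcases mul_eq_zero.mp h2 with h' | h'
        · exact absurd h' hw0
        · exact h'
      have hdx : divX P = 0 := by
        by_cases hd0 : P.natDegree = 0
        · rw [Polynomial.eq_C_of_natDegree_eq_zero hd0, hc0] at hP
          simp at hP
        · exact ih (divX P).natDegree
            (by rw [← hdeg, natDegree_divX_eq_natDegree_tsub_one]; omega)
            (divX P) rfl h4
      rw [← hsplit, hdx, hc0]; simp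

lemma pair_zero (hs2 : s^2 = 1 - 72*w) (hcc : PowerSeries.constantCoeff w = 0) (hw0 : w ≠ 0)
    {P Q : ℚ[X]} (h : aeval w P + aeval w Q * s = 0) : P = 0 ∧ Q = 0 := by
  have hkey : P^2 = Q^2 * (1 - 72*Polynomial.X) := by
    have h1 : aeval w (P^2 - Q^2 * (1 - 72*Polynomial.X)) = 0 := by
      simp only [map_sub, map_mul, map_pow, map_one, map_ofNat, aeval_X]
      have h' : aeval w P = -(aeval w Q * s) := by linear_combination h
      rw [h']
      linear_combination (aeval w Q)^2 * hs2
    have h2 := aeval_w_inj hcc hw0 _ h1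
    linear_combination h2
  have hQ : Q = 0 := by
    by_contra hQ0
    have hP0 : P ≠ 0 := by
      intro hP0
      rw [hP0] at hkey
      have h3 : Q^2 * (1 - 72*Polynomial.X) = 0 := by linear_combination -hkey
      rcases mul_eq_zero.mp h3 with h' | h'
      · exact hQ0 (pow_eq_zero_iff (n := 2) (by norm_num) |>.mp h')
      · have h4 : (1 - 72*Polynomial.X : ℚ[X]).natDegree = 1 := by compute_degree!
        rw [h'] at h4; simp at h4
    have hd : (1 - 72*Polynomial.X : ℚ[X]).natDegree = 1 := by compute_degree!
    have hne : (1 - 72*Polynomial.X : ℚ[X]) ≠ 0 := by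
      intro h'; rw [h'] at hd; simp at hd
    have e1 : (P^2).natDegree = 2 * P.natDegree := natDegree_pow P 2
    have e2 : (Q^2 * (1 - 72*Polynomial.X)).natDegree = 2 * Q.natDegree + 1 := by
      rw [natDegree_mul (pow_ne_zero 2 hQ0) hne, natDegree_pow, hd]
    rw [hkey, e2] at e1
    omega
  refine ⟨?_, hQ⟩
  rw [hQ] at hkey
  simpa using pow_eq_zero_iff (n := 2) (by norm_num) |>.mp (by linear_combination hkey)

end

lemma antidiagonal_split1 {M : Type*} [AddCommMonoid M] (g : ℕ) (f : ℕ×ℕ → M) :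
    ∑ p ∈ Finset.HasAntidiagonal.antidiagonal g, f p
      = f (0,g) + ∑ p ∈ (Finset.HasAntidiagonal.antidiagonal g).erase (0,g), f p := by
  rw [← Finset.sum_erase_add _ _ (by simp : ((0:ℕ),g) ∈ Finset.HasAntidiagonal.antidiagonal g)]
  exact (add_comm _ _)

lemma antidiagonal_split2 {M : Type*} [AddCommMonoid M] {g : ℕ} (hg : 1 ≤ g) (f : ℕ×ℕ → M) :
    ∑ p ∈ Finset.HasAntidiagonal.antidiagonal g, f p
      = f (0,g) + f (g,0)
        + ∑ p ∈ ((Finset.HasAntidiagonal.antidiagonal g).erase (0,g)).erase (g,0), f p := by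
  rw [antidiagonal_split1 g f]
  rw [← Finset.sum_erase_add _ _ (show ((g:ℕ),(0:ℕ)) ∈ (Finset.HasAntidiagonal.antidiagonal g).erase (0,g) by
    simp [Finset.mem_erase, Prod.ext_iff]; omega)]
  abel

end StmtAux

open StmtAux

theorem stmt3 (v w : PowerSeries ℚ) (hv0 : constantCoeff v = 0)
    (hv : 6 * (X : ℚ⟦X⟧) = (1 - 9 * v + 18 * v ^ 2) * v)
    (hw : w = X * (1 - 6 * v)⁻¹)
    (V W : ℕ → PowerSeries ℚ) (hV0 : V 0 = v) (hW0 : W 0 = w)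
    (hVg : ∀ g, 1 ≤ g →
      V g = 3 * ∑ p ∈ Finset.HasAntidiagonal.antidiagonal g, V p.1 * V p.2
        + 6 * ∑ p ∈ Finset.HasAntidiagonal.antidiagonal g,
            C (1 / ((4 : ℚ) ^ p.1 * (2 * p.1).factorial)) * D^[2 * p.1] (W p.2))
    (hWg : ∀ g, 1 ≤ g →
      W g = 6 * ∑ p ∈ Finset.HasAntidiagonal.antidiagonal g, ∑ r ∈ Finset.HasAntidiagonal.antidiagonal p.2,
            C (1 / ((4 : ℚ) ^ p.1 * (2 * p.1).factorial)) * (W r.1 * D^[2 * p.1] (V r.2)))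
    (Cg : ℕ → ℚ) (hC0 : Cg 0 = -1)
    (hCrec : ∀ g : ℕ, 1 ≤ g →
      ∑ p ∈ Finset.HasAntidiagonal.antidiagonal g, Cg p.1 * Cg p.2
        + 4 * (5 * (g : ℚ) - 6) * (5 * (g : ℚ) - 4) * Cg (g - 1) = 0) :
    ∀ g : ℕ, 1 ≤ g → ∀ Q : Polynomial ℚ,
      (1 - 108 * w) ^ (5 * g - 1) * W g = w * Polynomial.aeval w Q →
      Q.eval ((1 : ℚ) / 108) = 162 ^ g * Cg g := by
  set s : ℚ⟦X⟧ := 1 - 6*v with hsdef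
  have hsc : constantCoeff s = 1 := by
    simp [hsdef, map_sub, map_mul, map_ofNat, hv0]
  have hs_ne : s ≠ 0 := by intro h; rw [h] at hsc; simp at hsc
  have hvinv : s * s⁻¹ = 1 := PowerSeries.mul_inv_cancel _ (by rw [hsc]; norm_num)
  have hXws : (X : ℚ⟦X⟧) = w * s := by
    rw [hw]
    linear_combination (-(X : ℚ⟦X⟧)) * hvinv
  have hcw : constantCoeff w = 0 := by
    have h := congrArg (constantCoeff) hXws
    simpa [map_mul, hsc] using h.symm
  have hw0 : w ≠ 0 := by
    intro h; rw [h, zero_mul] at hXws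
    exact PowerSeries.X_ne_zero hXws
  have hs2 : s^2 = 1 - 72*w := by
    have hcubic : s - s^3 = 72 * (X : ℚ⟦X⟧) := by
      rw [hsdef]; linear_combination (-12 : ℚ⟦X⟧) * hv
    have h0 : s * (1 - s^2 - 72*w) = 0 := by linear_combination hcubic + 72 * hXws
    rcases mul_eq_zero.mp h0 with h | h
    · exact absurd h hs_ne
    · linear_combination -h
  have hne2 : (2 : ℚ⟦X⟧) ≠ 0 := by
    intro h
    have h2 := congrArg (constantCoeff) h
    simp [map_ofNat] at h2
  have hsDs : s * D s = -36 * D w := by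
    have h := congrArg D hs2
    have hrhs : D (1 - 72*w) = -72 * D w := by
      rw [Dsub, Done, Dmul, Dnum]; ring
    rw [pow_two, Dmul, hrhs] at h
    have h2 : (2 : ℚ⟦X⟧) * (s * D s) = 2 * (-36 * D w) := by linear_combination h
    exact mul_left_cancel₀ hne2 h2
  have hprod : (1 : ℚ⟦X⟧) = w * D s + s * D w := by
    rw [← DX, hXws, Dmul]
  have hDw : (1-108*w) * D w = s := by
    linear_combination -s * hprod - w * hsDs - (D w) * hs2
  have hDs : (1-108*w) * D s = -36 := by
    have h0 : s * ((1-108*w) * D s + 36) = 0 := by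
      linear_combination (1-108*w) * hsDs - 36 * hDw
    rcases mul_eq_zero.mp h0 with h | h
    · exact absurd h hs_ne
    · linear_combination h
  have hDv : (1-108*w) * D v = 6 := by
    have h : D s = -6 * D v := by
      rw [hsdef, Dsub, Dmul, Done, Dnum]; ring
    rw [h] at hDs
    have hne6 : (6 : ℚ⟦X⟧) ≠ 0 := by
      intro h6
      have h2 := congrArg (constantCoeff) h6
      simp [map_ofNat] at h2
    refine mul_left_cancel₀ hne6 ?_
    linear_combination -hDs
  have hDs' : (1-108*w) * D s = -36 := by
    have h : D s = -6 * D v := by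
      rw [hsdef, Dsub, Dmul, Done, Dnum]; ring
    rw [h]
    linear_combination -6 * hDv
  -- GR base representations
  have GRw : GR w s w 0 (1/108) 0 :=
    ⟨Polynomial.X, 0, by simp, by simp, by simp⟩
  have GRs : GR w s s 0 0 1 := ⟨0, 1, by simp, by simp, by simp⟩
  have GRv : GR w s v 0 (1/6) (-1/6) := by
    refine ⟨Polynomial.C (1/6), -Polynomial.C (1/6), ?_, by simp, by norm_num⟩
    have hc : (PowerSeries.C (R := ℚ) (1/6)) * 6 = 1 := by
      rw [← map_ofNat (PowerSeries.C (R := ℚ)) 6, ← map_mul]; norm_num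
    simp only [pow_zero, one_mul, Polynomial.aeval_C, ← PowerSeries.C_eq_algebraMap, map_neg]
    linear_combination (PowerSeries.C (R := ℚ) (1/6)) * hsdef - v * hc
  have GRDw : GR w s (D w) 1 0 1 :=
    ⟨0, 1, by rw [pow_one]; simpa using hDw, by simp, by simp⟩
  have GRDv : GR w s (D v) 1 6 0 :=
    ⟨Polynomial.C 6, 0, by rw [pow_one, hDv]; simp [map_ofNat], by simp, by simp⟩
  have gD : ∀ {e : ℚ⟦X⟧} {n : ℕ} {a b : ℚ}, GR w s e n a b →
      GR w s (D e) (n+2) (36*n*b) (108*n*a) :=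
    fun h => h.D' hs2 hDw hDs'
  have gDiter : ∀ (j : ℕ) {e : ℚ⟦X⟧} {n : ℕ} {a b : ℚ}, GR w s e n a b →
      ∃ a' b', GR w s (D^[j] e) (n+2*j) a' b' := by
    intro j
    induction j with
    | zero => intro e n a b h; exact ⟨a, b, by simpa using h⟩
    | succ k ihk =>
      intro e n a b h
      obtain ⟨a', b', h'⟩ := ihk h
      refine ⟨36*(n+2*k)*b', 108*(n+2*k)*a', ?_⟩
      rw [Function.iterate_succ_apply']
      exact (gD h').congr' (by omega) (by push_cast; ring) (by push_cast; ring)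
  have g3 : ∀ {e : ℚ⟦X⟧} {n : ℕ} {a b : ℚ}, GR w s e n a b → GR w s (3*e) n (3*a) (3*b) :=
    fun h => (GR.cmul 3 h).ofEq (by rw [map_ofNat])
  have g6 : ∀ {e : ℚ⟦X⟧} {n : ℕ} {a b : ℚ}, GR w s e n a b → GR w s (6*e) n (6*a) (6*b) :=
    fun h => (GR.cmul 6 h).ofEq (by rw [map_ofNat])
  -- the leading-coefficient data
  set u : ℕ → ℚ := fun h => 162 ^ h * Cg h / 108 with hu
  have key : ∀ g : ℕ,
      (1 ≤ g → GR w s (V g) (5*g-1) 0 (18 * u g) ∧ GR w s (W g) (5*g-1) (u g) 0)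
      ∧ GR w s (D^[2] (W g)) (5*g+3) (3888 * ((5*(g:ℚ)-1)*(5*(g:ℚ)+1)) * u g) 0
      ∧ GR w s (D^[2] (V g)) (5*g+3) 0 (69984 * ((5*(g:ℚ)-1)*(5*(g:ℚ)+1)) * u g) := by
    intro g
    induction g using Nat.strong_induction_on with
    | _ g ih =>
      rcases Nat.eq_zero_or_pos g with hg0 | hgpos
      · subst hg0
        refine ⟨fun h => absurd h (by norm_num), ?_, ?_⟩
        · have h1 := gD GRDw
          rw [hW0, show D^[2] w = D (D w) from rfl]
          exact h1.congr' (by norm_num) (by simp [hu, hC0]; norm_num) (by norm_num)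
        · have h1 := gD GRDv
          rw [hV0, show D^[2] v = D (D v) from rfl]
          exact h1.congr' (by norm_num) (by norm_num) (by simp [hu, hC0]; norm_num)
      · -- g ≥ 1 : the inductive step
        have hg1 : 1 ≤ g := hgpos
        have ihV : ∀ h, 1 ≤ h → h < g → GR w s (V h) (5*h-1) 0 (18 * u h) :=
          fun h h1 h2 => ((ih h h2).1 h1).1
        have ihW : ∀ h, 1 ≤ h → h < g → GR w s (W h) (5*h-1) (u h) 0 :=
          fun h h1 h2 => ((ih h h2).1 h1).2
        have ihD2W : ∀ h, h < g → GR w s (D^[2] (W h)) (5*h+3)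
            (3888 * ((5*(h:ℚ)-1)*(5*(h:ℚ)+1)) * u h) 0 := fun h h2 => (ih h h2).2.1
        have ihD2V : ∀ h, h < g → GR w s (D^[2] (V h)) (5*h+3)
            0 (69984 * ((5*(h:ℚ)-1)*(5*(h:ℚ)+1)) * u h) := fun h h2 => (ih h h2).2.2
        have hWrep : ∀ m, m < g → ∃ a b, GR w s (W m) (5*m-1) a b := by
          intro m hm
          by_cases h0 : m = 0
          · exact ⟨1/108, 0, by subst h0; rw [hW0]; exact GRw⟩
          · exact ⟨u m, 0, ihW m (by omega) hm⟩
        have hE2mem : ∀ p : ℕ×ℕ, p ∈ (Finset.HasAntidiagonal.antidiagonal g).erase (0,g) →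
            p.1 + p.2 = g ∧ 1 ≤ p.1 := by
          intro p hp
          simp only [Finset.mem_erase, Finset.HasAntidiagonal.mem_antidiagonal, ne_eq, Prod.ext_iff,
            not_and] at hp
          omega
        have hE1mem : ∀ p : ℕ×ℕ, p ∈ ((Finset.HasAntidiagonal.antidiagonal g).erase (0,g)).erase (g,0) →
            p.1 + p.2 = g ∧ 1 ≤ p.1 ∧ 1 ≤ p.2 := by
          intro p hp
          simp only [Finset.mem_erase, Finset.HasAntidiagonal.mem_antidiagonal, ne_eq, Prod.ext_iff,
            not_and] at hp
          omega
        -- split equations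
        have hsplit1 := antidiagonal_split2 hg1 (fun p => V p.1 * V p.2)
        have hsplit2 := antidiagonal_split1 g
          (fun p => C (1 / ((4:ℚ)^p.1 * (2*p.1).factorial)) * D^[2*p.1] (W p.2))
        have hsplit3 := antidiagonal_split1 g
          (fun p => ∑ r ∈ Finset.HasAntidiagonal.antidiagonal p.2,
            C (1 / ((4:ℚ)^p.1 * (2*p.1).factorial)) * (W r.1 * D^[2*p.1] (V r.2)))
        have hsplit4 := antidiagonal_split2 hg1 (fun r => W r.1 * V r.2)
        simp only [hV0, hW0, pow_zero, mul_zero, Nat.factorial_zero, Nat.cast_one, mul_one, one_mul, div_one, map_one, Function.iterate_zero, id_eq] at hsplit1 hsplit2 hsplit3 hsplit4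
        have hVeq := hVg g hg1
        have hWeq := hWg g hg1
        rw [hsplit1, hsplit2] at hVeq
        rw [hsplit3, hsplit4] at hWeq
        -- solved linear system
        have heq1 : s * V g = 6 * W g + (3*(∑ p ∈ ((Finset.HasAntidiagonal.antidiagonal g).erase (0,g)).erase (g,0), V p.1 * V p.2) + 6*(∑ p ∈ (Finset.HasAntidiagonal.antidiagonal g).erase (0,g), C (1 / ((4:ℚ)^p.1 * (2*p.1).factorial)) * D^[2*p.1] (W p.2))) := by
          linear_combination (V g) * hsdef + hVeq
        have heq2 : s * W g = 6 * (w * V g) + (6*(∑ p ∈ ((Finset.HasAntidiagonal.antidiagonal g).erase (0,g)).erase (g,0), W p.1 * V p.2) + 6*(∑ p ∈ (Finset.HasAntidiagonal.antidiagonal g).erase (0,g), ∑ r ∈ Finset.HasAntidiagonal.antidiagonal p.2, C (1 / ((4:ℚ)^p.1 * (2*p.1).factorial)) * (W r.1 * D^[2*p.1] (V r.2)))) := by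
          linear_combination (W g) * hsdef + hWeq
        have heqV : (1-108*w) * V g
            = s * (3*(∑ p ∈ ((Finset.HasAntidiagonal.antidiagonal g).erase (0,g)).erase (g,0), V p.1 * V p.2) + 6*(∑ p ∈ (Finset.HasAntidiagonal.antidiagonal g).erase (0,g), C (1 / ((4:ℚ)^p.1 * (2*p.1).factorial)) * D^[2*p.1] (W p.2))) + 6*(6*(∑ p ∈ ((Finset.HasAntidiagonal.antidiagonal g).erase (0,g)).erase (g,0), W p.1 * V p.2) + 6*(∑ p ∈ (Finset.HasAntidiagonal.antidiagonal g).erase (0,g), ∑ r ∈ Finset.HasAntidiagonal.antidiagonal p.2, C (1 / ((4:ℚ)^p.1 * (2*p.1).factorial)) * (W r.1 * D^[2*p.1] (V r.2)))) := by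
          linear_combination s * heq1 + 6 * heq2 - (V g) * hs2
        have heqW : (1-108*w) * W g
            = 6*(w * (3*(∑ p ∈ ((Finset.HasAntidiagonal.antidiagonal g).erase (0,g)).erase (g,0), V p.1 * V p.2) + 6*(∑ p ∈ (Finset.HasAntidiagonal.antidiagonal g).erase (0,g), C (1 / ((4:ℚ)^p.1 * (2*p.1).factorial)) * D^[2*p.1] (W p.2)))) + s*(6*(∑ p ∈ ((Finset.HasAntidiagonal.antidiagonal g).erase (0,g)).erase (g,0), W p.1 * V p.2) + 6*(∑ p ∈ (Finset.HasAntidiagonal.antidiagonal g).erase (0,g), ∑ r ∈ Finset.HasAntidiagonal.antidiagonal p.2, C (1 / ((4:ℚ)^p.1 * (2*p.1).factorial)) * (W r.1 * D^[2*p.1] (V r.2)))) := by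
          linear_combination 6 * w * heq1 + s * heq2 - (W g) * hs2
        -- GR for the four sums
        have GRS1 : GR w s (∑ p ∈ ((Finset.HasAntidiagonal.antidiagonal g).erase (0,g)).erase (g,0), V p.1 * V p.2) (5*g-2)
            (∑ p ∈ ((Finset.HasAntidiagonal.antidiagonal g).erase (0,g)).erase (g,0), 108 * (u p.1 * u p.2)) 0 := by
          refine (GR.sum _ _ _ (fun _ => (0:ℚ)) _ ?_).congr rfl (by simp)
          intro p hp
          obtain ⟨hsum, h1, h2⟩ := hE1mem p hp
          exact (GR.mul hs2 (ihV p.1 h1 (by omega)) (ihV p.2 h2 (by omega))).congr'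
            (by omega) (by ring) (by ring)
        have GRS2 : GR w s (∑ p ∈ (Finset.HasAntidiagonal.antidiagonal g).erase (0,g), C (1 / ((4:ℚ)^p.1 * (2*p.1).factorial)) * D^[2*p.1] (W p.2)) (5*g-2)
            (486 * ((5*(g:ℚ)-6)*(5*(g:ℚ)-4)) * u (g-1)) 0 := by
          have hterm : ∀ p ∈ (Finset.HasAntidiagonal.antidiagonal g).erase (0,g),
              GR w s (C (1 / ((4:ℚ)^p.1 * (2*p.1).factorial)) * D^[2*p.1] (W p.2)) (5*g-2)
                (if p.1 = 1 then 486 * ((5*(g:ℚ)-6)*(5*(g:ℚ)-4)) * u (g-1) else 0) 0 := by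
            intro p hp
            obtain ⟨hsum, h1⟩ := hE2mem p hp
            by_cases hp1 : p.1 = 1
            · have hp2 : p.2 = g - 1 := by omega
              rw [hp1, hp2, if_pos rfl, show (2*1 : ℕ) = 2 from rfl]
              have h := (ihD2W (g-1) (by omega)).cmul
                (c := 1 / ((4:ℚ)^1 * ((2*1 : ℕ).factorial : ℚ)))
              refine h.congr' (by omega) ?_ (by ring)
              rw [Nat.cast_sub hg1]
              norm_num [Nat.factorial]
              ring
            · have hp2 : 2 ≤ p.1 := by omega
              obtain ⟨a', b', hD⟩ := gDiter (2*p.1 - 2) (ihD2W p.2 (by omega))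
              rw [← Function.iterate_add_apply, show 2*p.1-2+2 = 2*p.1 by omega] at hD
              have h := (hD.raiseLt (show (5*p.2+3) + 2*(2*p.1-2) < 5*g-2 by omega)).cmul
                (c := 1 / ((4:ℚ)^p.1 * ((2*p.1).factorial : ℚ)))
              exact h.congr (by rw [if_neg hp1]; ring) (by ring)
          refine (GR.sum _ _ _ (fun _ => (0:ℚ)) _ hterm).congr ?_ (by simp)
          rw [Finset.sum_eq_single_of_mem ((1:ℕ), g-1)
            (by simp only [Finset.mem_erase, Finset.HasAntidiagonal.mem_antidiagonal, ne_eq, Prod.ext_iff,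
                  not_and]
                omega)
            (fun b hb hne => by
                obtain ⟨hsum, h1⟩ := hE2mem b hb
                rw [if_neg]
                intro hb1
                exact hne (Prod.ext hb1 (by omega)))]
          simp
        have GRS3 : GR w s (∑ p ∈ ((Finset.HasAntidiagonal.antidiagonal g).erase (0,g)).erase (g,0), W p.1 * V p.2) (5*g-2) 0
            (∑ p ∈ ((Finset.HasAntidiagonal.antidiagonal g).erase (0,g)).erase (g,0), 18 * (u p.1 * u p.2)) := by
          refine (GR.sum _ _ (fun _ => (0:ℚ)) _ _ ?_).congr (by simp) rfl
          intro p hp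
          obtain ⟨hsum, h1, h2⟩ := hE1mem p hp
          exact (GR.mul hs2 (ihW p.1 h1 (by omega)) (ihV p.2 h2 (by omega))).congr'
            (by omega) (by ring) (by ring)
        have GRS4 : GR w s (∑ p ∈ (Finset.HasAntidiagonal.antidiagonal g).erase (0,g), ∑ r ∈ Finset.HasAntidiagonal.antidiagonal p.2, C (1 / ((4:ℚ)^p.1 * (2*p.1).factorial)) * (W r.1 * D^[2*p.1] (V r.2))) (5*g-2) 0
            (81 * ((5*(g:ℚ)-6)*(5*(g:ℚ)-4)) * u (g-1)) := by
          have hterm : ∀ p ∈ (Finset.HasAntidiagonal.antidiagonal g).erase (0,g),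
              GR w s (∑ r ∈ Finset.HasAntidiagonal.antidiagonal p.2,
                C (1 / ((4:ℚ)^p.1 * (2*p.1).factorial)) * (W r.1 * D^[2*p.1] (V r.2)))
                (5*g-2) 0
                (if p.1 = 1 then 81 * ((5*(g:ℚ)-6)*(5*(g:ℚ)-4)) * u (g-1) else 0) := by
            intro p hp
            obtain ⟨hsum, h1⟩ := hE2mem p hp
            by_cases hp1 : p.1 = 1
            · have hp2 : p.2 = g - 1 := by omega
              rw [hp1, hp2, if_pos rfl]
              have hterm2 : ∀ r ∈ Finset.HasAntidiagonal.antidiagonal (g-1),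
                  GR w s (C (1 / ((4:ℚ)^1 * (2*1).factorial)) * (W r.1 * D^[2*1] (V r.2)))
                    (5*g-2) 0
                    (if r.1 = 0 then 81 * ((5*(g:ℚ)-6)*(5*(g:ℚ)-4)) * u (g-1) else 0) := by
                intro r hr
                rw [Finset.HasAntidiagonal.mem_antidiagonal] at hr
                by_cases hr1 : r.1 = 0
                · rw [hr1, show r.2 = g - 1 by omega, hW0, if_pos rfl,
                    show (2*1 : ℕ) = 2 from rfl]
                  have h := (GR.mul hs2 GRw (ihD2V (g-1) (by omega))).cmul
                    (c := 1 / ((4:ℚ)^1 * ((2*1 : ℕ).factorial : ℚ)))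
                  refine h.congr' (by omega) (by ring) ?_
                  rw [Nat.cast_sub hg1]
                  norm_num [Nat.factorial]
                  ring
                · rw [show (2*1 : ℕ) = 2 from rfl]
                  have h := ((GR.mul hs2 (ihW r.1 (by omega) (by omega))
                    (ihD2V r.2 (by omega))).raiseLt
                      (show (5*r.1-1) + (5*r.2+3) < 5*g-2 by omega)).cmul
                        (c := 1 / ((4:ℚ)^1 * ((2*1 : ℕ).factorial : ℚ)))
                  exact h.congr (by ring) (by rw [if_neg hr1]; ring)
              refine (GR.sum _ _ (fun _ => (0:ℚ)) _ _ hterm2).congr (by simp) ?_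
              rw [Finset.sum_eq_single_of_mem ((0:ℕ), g-1)
                (by simp)
                (fun b hb hne => by
                    rw [Finset.HasAntidiagonal.mem_antidiagonal] at hb
                    rw [if_neg]
                    intro hb1
                    exact hne (Prod.ext hb1 (by omega)))]
              simp
            · have hp2 : 2 ≤ p.1 := by omega
              have hterm2 : ∀ r ∈ Finset.HasAntidiagonal.antidiagonal p.2,
                  GR w s (C (1 / ((4:ℚ)^p.1 * (2*p.1).factorial))
                    * (W r.1 * D^[2*p.1] (V r.2))) (5*g-2) 0 0 := by
                intro r hr
                rw [Finset.HasAntidiagonal.mem_antidiagonal] at hr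
                obtain ⟨aw, bw, hWr⟩ := hWrep r.1 (by omega)
                obtain ⟨a', b', hD⟩ := gDiter (2*p.1 - 2) (ihD2V r.2 (by omega))
                rw [← Function.iterate_add_apply, show 2*p.1-2+2 = 2*p.1 by omega] at hD
                have h := ((GR.mul hs2 hWr hD).raiseLt
                  (show (5*r.1-1) + ((5*r.2+3) + 2*(2*p.1-2)) < 5*g-2 by omega)).cmul
                    (c := 1 / ((4:ℚ)^p.1 * ((2*p.1).factorial : ℚ)))
                exact h.congr (by ring) (by ring)
              rw [if_neg hp1]
              exact (GR.sum _ _ (fun _ => (0:ℚ)) (fun _ => (0:ℚ)) _ hterm2).congr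
                (by simp) (by simp)
          refine (GR.sum _ _ (fun _ => (0:ℚ)) _ _ hterm).congr (by simp) ?_
          rw [Finset.sum_eq_single_of_mem ((1:ℕ), g-1)
            (by simp only [Finset.mem_erase, Finset.HasAntidiagonal.mem_antidiagonal, ne_eq, Prod.ext_iff,
                  not_and]
                omega)
            (fun b hb hne => by
                obtain ⟨hsum, h1⟩ := hE2mem b hb
                rw [if_neg]
                intro hb1
                exact hne (Prod.ext hb1 (by omega)))]
          simp
        -- the numeric key identity
        have hC : ∑ p ∈ ((Finset.HasAntidiagonal.antidiagonal g).erase (0,g)).erase (g,0), Cg p.1 * Cg p.2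
            = 2 * Cg g - 4*((5*(g:ℚ)-6)*(5*(g:ℚ)-4))*Cg (g-1) := by
          have h := hCrec g hg1
          rw [antidiagonal_split2 hg1 (fun p => Cg p.1 * Cg p.2)] at h
          simp only [hC0] at h
          linear_combination h
        have hsig : (∑ p ∈ ((Finset.HasAntidiagonal.antidiagonal g).erase (0,g)).erase (g,0), u p.1 * u p.2)
            = 162^g/11664 * (2 * Cg g - 4*((5*(g:ℚ)-6)*(5*(g:ℚ)-4))*Cg (g-1)) := by
          rw [← hC, Finset.mul_sum]
          refine Finset.sum_congr rfl ?_
          intro p hp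
          obtain ⟨hsum, h1, h2⟩ := hE1mem p hp
          have h162 : (162:ℚ)^p.1 * 162^p.2 = 162^g := by rw [← pow_add, hsum]
          simp only [hu]
          field_simp
          linear_combination (Cg p.1 * Cg p.2 * 11664) * h162
        have hpow : (162:ℚ)^g = 162 * 162^(g-1) := by
          conv_lhs => rw [show g = (g-1)+1 by omega]
          rw [pow_succ]; ring
        have hval : 54 * (∑ p ∈ ((Finset.HasAntidiagonal.antidiagonal g).erase (0,g)).erase (g,0), u p.1 * u p.2) + 324 * ((5*(g:ℚ)-6)*(5*(g:ℚ)-4)) * u (g-1) = u g := by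
          rw [hsig]
          simp only [hu]
          rw [hpow]
          ring
        -- assemble
        have GRK1 : GR w s (3*(∑ p ∈ ((Finset.HasAntidiagonal.antidiagonal g).erase (0,g)).erase (g,0), V p.1 * V p.2) + 6*(∑ p ∈ (Finset.HasAntidiagonal.antidiagonal g).erase (0,g), C (1 / ((4:ℚ)^p.1 * (2*p.1).factorial)) * D^[2*p.1] (W p.2))) (5*g-2)
            (324 * (∑ p ∈ ((Finset.HasAntidiagonal.antidiagonal g).erase (0,g)).erase (g,0), u p.1 * u p.2) + 2916 * ((5*(g:ℚ)-6)*(5*(g:ℚ)-4)) * u (g-1)) 0 := by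
          refine ((g3 GRS1).add (g6 GRS2)).congr ?_ (by ring)
          rw [← Finset.mul_sum]
          ring
        have GRK2 : GR w s (6*(∑ p ∈ ((Finset.HasAntidiagonal.antidiagonal g).erase (0,g)).erase (g,0), W p.1 * V p.2) + 6*(∑ p ∈ (Finset.HasAntidiagonal.antidiagonal g).erase (0,g), ∑ r ∈ Finset.HasAntidiagonal.antidiagonal p.2, C (1 / ((4:ℚ)^p.1 * (2*p.1).factorial)) * (W r.1 * D^[2*p.1] (V r.2)))) (5*g-2) 0
            (108 * (∑ p ∈ ((Finset.HasAntidiagonal.antidiagonal g).erase (0,g)).erase (g,0), u p.1 * u p.2) + 486 * ((5*(g:ℚ)-6)*(5*(g:ℚ)-4)) * u (g-1)) := by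
          refine ((g6 GRS3).add (g6 GRS4)).congr (by ring) ?_
          rw [← Finset.mul_sum]
          ring
        have GRVg : GR w s (V g) (5*g-1) 0 (18 * u g) := by
          have h := ((GR.mul hs2 GRs GRK1).congr' (Nat.zero_add _) rfl rfl).add (g6 GRK2)
          exact ((h.ofEq heqV.symm).shift).congr' (by omega) (by ring)
            (by linear_combination 18 * hval)
        have GRWg : GR w s (W g) (5*g-1) (u g) 0 := by
          have h := ((g6 ((GR.mul hs2 GRw GRK1).congr' (Nat.zero_add _) rfl rfl)).add
            ((GR.mul hs2 GRs GRK2).congr' (Nat.zero_add _) rfl rfl))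
          exact ((h.ofEq heqW.symm).shift).congr' (by omega)
            (by linear_combination hval) (by ring)
        have hc5 : ((5*g-1 : ℕ) : ℚ) = 5*(g:ℚ)-1 := by
          rw [Nat.cast_sub (by omega : 1 ≤ 5*g)]
          push_cast
          ring
        refine ⟨fun _ => ⟨GRVg, GRWg⟩, ?_, ?_⟩
        · have h1 := gD (gD GRWg)
          rw [show D^[2] (W g) = D (D (W g)) from rfl]
          refine h1.congr' (by omega) ?_ (by ring)
          push_cast [hc5]
          ring
        · have h1 := gD (gD GRVg)
          rw [show D^[2] (V g) = D (D (V g)) from rfl]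
          refine h1.congr' (by omega) (by ring) ?_
          push_cast [hc5]
          ring
  -- conclusion
  intro g hg Q hQ
  obtain ⟨P, Qp, hE, hP, hQp⟩ := ((key g).1 hg).2
  have h0 : Polynomial.aeval w (P - Polynomial.X * Q) + Polynomial.aeval w Qp * s = 0 := by
    simp only [map_sub, map_mul, Polynomial.aeval_X]
    linear_combination hQ - hE
  obtain ⟨h1, h2⟩ := pair_zero hs2 hcw hw0 h0
  have h3 : P = Polynomial.X * Q := by linear_combination h1
  have h4 := congrArg (Polynomial.eval ((1:ℚ)/108)) h3
  rw [hP, Polynomial.eval_mul, Polynomial.eval_X] at h4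
  simp only [hu] at h4
  linear_combination (-108 : ℚ) * h4
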